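/- Let L be a linear functional on polynomials with moments ν_n such that all Hankel determinants det_{0≤i,j≤n}(ν_{i+j}) are nonzero. Then the polynomials Q_n(x) = det_{0≤i,j≤n−1}(ν_{i+j+1} − ν_{i+j} x) form a sequence of orthogonal polynomials with respect to L, i.e., L(Q_m Q_n) = 0 for m ≠ n and L(Q_n²) ≠ 0. -/

import Mathlib

open Polynomial Matrix Finset

namespace MomOrth

variable {K : Type*} [Field K] (ν : ℕ → K)

/-- cofactor minors of the last row -/
noncomputable def cc (n : ℕ) (j : Fin (n + 1)) : K :=
  det (of fun i j' : Fin n => ν ((i : ℕ) + ((j.succAbove j' : Fin (n+1)) : ℕ)))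

noncomputable def Amat (n : ℕ) : Matrix (Fin (n + 1)) (Fin (n + 1)) (Polynomial K) :=
  of fun i j => if (i : ℕ) < n then C (ν ((i : ℕ) + (j : ℕ))) else X ^ (j : ℕ)

noncomputable def Umat (K : Type*) [Field K] (n : ℕ) : Matrix (Fin (n + 1)) (Fin (n + 1)) (Polynomial K) :=
  of fun i j => if (i : ℕ) + 1 = (j : ℕ) then -X else if i = j then 1 else 0

noncomputable def Bmat (n : ℕ) : Matrix (Fin (n + 1)) (Fin (n + 1)) (Polynomial K) :=
  of fun i j =>
    Fin.cases (if (i : ℕ) < n then C (ν (i : ℕ)) else 1)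
      (fun j' => if (i : ℕ) < n then
          C (ν ((i : ℕ) + (j' : ℕ) + 1)) - C (ν ((i : ℕ) + (j' : ℕ))) * X else 0) j

lemma detU (n : ℕ) : det (Umat K n) = 1 := by
  have h : (Umat K n).BlockTriangular id := by
    intro i j hij
    simp only [id] at hij
    have h1 : ¬ ((i : ℕ) + 1 = (j : ℕ)) := by omega
    have h2 : i ≠ j := by exact fun h => absurd (h ▸ rfl) (ne_of_gt hij)
    simp [Umat, h1, h2]
  rw [Matrix.det_of_upperTriangular h]
  apply Finset.prod_eq_one
  intro i _
  have h1 : ¬ ((i : ℕ) + 1 = (i : ℕ)) := by omega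
  simp [Umat, h1]

lemma mulU (n : ℕ) : Amat ν n * Umat K n = Bmat ν n := by
  ext i j
  rw [Matrix.mul_apply]
  induction j using Fin.cases with
  | zero =>
    rw [Finset.sum_eq_single (0 : Fin (n + 1))]
    · simp [Umat, Bmat, Amat]
    · intro k _ hk
      have h1 : ¬ ((k : ℕ) + 1 = ((0 : Fin (n+1)) : ℕ)) := by simp
      simp [Umat, h1, hk]
    · simp
  | succ j' =>
    have hne : (j'.castSucc : Fin (n+1)) ≠ j'.succ := (Fin.castSucc_lt_succ : j'.castSucc < j'.succ).ne
    have key : ∀ k : Fin (n + 1), Amat ν n i k * Umat K n k j'.succ =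
        (if k = j'.castSucc then -(Amat ν n i j'.castSucc * X) else 0) +
        (if k = j'.succ then Amat ν n i j'.succ else 0) := by
      intro k
      by_cases h1 : k = j'.castSucc
      · subst h1
        have : ((j'.castSucc : Fin (n+1)) : ℕ) + 1 = ((j'.succ : Fin (n+1)) : ℕ) := by simp
        simp [Umat, this, hne]
      · by_cases h2 : k = j'.succ
        · subst h2
          have h3 : ¬ ((j'.succ : Fin (n+1)) : ℕ) + 1 = ((j'.succ : Fin (n+1)) : ℕ) := by omega
          simp [Umat, h3, h1]
        · have h3 : ¬ ((k : ℕ) + 1 = ((j'.succ : Fin (n+1)) : ℕ)) := by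
            simp only [Fin.val_succ]
            intro h
            apply h1
            apply Fin.ext
            simp [Fin.coe_castSucc]
            omega
          have h4 : ¬ (k : ℕ) = (j' : ℕ) := by simp only [Fin.val_succ] at h3; omega
          have hU : Umat K n k j'.succ = 0 := by simp [Umat, h3, h2, h4]
          simp [hU, h1, h2]
    rw [Finset.sum_congr rfl (fun k _ => key k), Finset.sum_add_distrib,
      Finset.sum_ite_eq' , Finset.sum_ite_eq']
    simp only [Finset.mem_univ, if_true]
    by_cases hi : (i : ℕ) < n
    · simp [Amat, Bmat, hi]
      ring
    · simp [Amat, Bmat, hi, pow_succ]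


noncomputable def Qmat (n : ℕ) : Matrix (Fin n) (Fin n) (Polynomial K) :=
  of fun i j => C (ν ((i : ℕ) + (j : ℕ) + 1)) - C (ν ((i : ℕ) + (j : ℕ))) * X

lemma detB (n : ℕ) : det (Bmat ν n) = (-1) ^ n * det (Qmat ν n) := by
  rw [Matrix.det_succ_row (Bmat ν n) (Fin.last n)]
  rw [Finset.sum_eq_single (0 : Fin (n + 1))]
  · have h0 : Bmat ν n (Fin.last n) 0 = 1 := by simp [Bmat]
    have hsub : (Bmat ν n).submatrix (Fin.last n).succAbove (0 : Fin (n+1)).succAbove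
        = Qmat ν n := by
      ext i j
      have : ((i.castSucc : Fin (n+1)) : ℕ) < n := by simp [i.isLt]
      simp [Bmat, Qmat, Matrix.submatrix_apply, Fin.succAbove_last, this]
    rw [h0, hsub]
    simp
  · intro j _ hj
    have : Bmat ν n (Fin.last n) j = 0 := by
      induction j using Fin.cases with
      | zero => exact absurd rfl hj
      | succ j' => simp [Bmat]
    rw [this]; ring
  · simp

lemma detAQ (n : ℕ) : det (Amat ν n) = (-1) ^ n * det (Qmat ν n) := by
  rw [← detB, ← mulU, Matrix.det_mul, detU, mul_one]

lemma detA_sum (n : ℕ) : det (Amat ν n)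
    = ∑ j : Fin (n + 1), ((-1 : K) ^ (n + (j : ℕ)) * cc ν n j) • X ^ (j : ℕ) := by
  rw [Matrix.det_succ_row (Amat ν n) (Fin.last n)]
  refine Finset.sum_congr rfl fun j _ => ?_
  have h1 : Amat ν n (Fin.last n) j = X ^ (j : ℕ) := by simp [Amat]
  have h2 : det ((Amat ν n).submatrix (Fin.last n).succAbove j.succAbove) = C (cc ν n j) := by
    have : (Amat ν n).submatrix (Fin.last n).succAbove j.succAbove
        = (of fun i j' : Fin n => ν ((i : ℕ) + ((j.succAbove j' : Fin (n+1)) : ℕ))).map C := by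
      ext i j'
      have : ((i.castSucc : Fin (n+1)) : ℕ) < n := by simp [i.isLt]
      simp [Amat, Matrix.submatrix_apply, Fin.succAbove_last, this]
    rw [this, ← RingHom.mapMatrix_apply, ← RingHom.map_det, cc]
  rw [h1, h2, Fin.val_last, smul_eq_C_mul, C_mul, ← C_1, ← C_neg, ← C_pow]
  ring

/-- the Hankel-like determinant with last row shifted by `k` -/
noncomputable def Dk (n k : ℕ) : K :=
  det (of fun i j : Fin (n + 1) => ν ((if (i : ℕ) < n then (i : ℕ) else k) + (j : ℕ)))

lemma Dk_sum (n k : ℕ) :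
    Dk ν n k = ∑ j : Fin (n + 1), (-1) ^ (n + (j : ℕ)) * ν (k + (j : ℕ)) * cc ν n j := by
  rw [Dk, Matrix.det_succ_row _ (Fin.last n)]
  refine Finset.sum_congr rfl fun j _ => ?_
  have h1 : (of fun i j : Fin (n + 1) =>
      ν ((if (i : ℕ) < n then (i : ℕ) else k) + (j : ℕ))) (Fin.last n) j = ν (k + (j : ℕ)) := by
    simp
  have h2 : (of fun i j : Fin (n + 1) =>
        ν ((if (i : ℕ) < n then (i : ℕ) else k) + (j : ℕ))).submatrix
        (Fin.last n).succAbove j.succAbove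
      = of fun i j' : Fin n => ν ((i : ℕ) + ((j.succAbove j' : Fin (n+1)) : ℕ)) := by
    ext i j'
    have : ((i.castSucc : Fin (n+1)) : ℕ) < n := by simp [i.isLt]
    simp [Matrix.submatrix_apply, Fin.succAbove_last, this]
  rw [h1, h2, Fin.val_last, cc]


lemma detQA (n : ℕ) : det (Qmat ν n) = ((-1 : K) ^ n) • det (Amat ν n) := by
  have h : ((-1 : K) ^ n) • ((-1 : Polynomial K) ^ n) = 1 := by
    rw [← _root_.smul_pow]
    norm_num
  rw [detAQ, ← smul_mul_assoc, h, one_mul]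


lemma cc_last (n : ℕ) : cc ν n (Fin.last n)
    = det (of fun i j : Fin n => ν ((i : ℕ) + (j : ℕ))) := by
  unfold cc
  congr 1
  ext i j'
  simp [Fin.succAbove_last]

lemma Dk_eq_zero {n k : ℕ} (hk : k < n) : Dk ν n k = 0 := by
  apply Matrix.det_zero_of_row_eq (i := (⟨k, by omega⟩ : Fin (n + 1))) (j := Fin.last n)
  · intro h
    have := congrArg Fin.val h
    simp [Fin.val_last] at this
    omega
  · funext j
    simp [hk]

lemma Dk_diag (n : ℕ) :
    Dk ν n n = det (of fun i j : Fin (n + 1) => ν ((i : ℕ) + (j : ℕ))) := by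
  unfold Dk
  congr 1
  ext i j
  have h : (if (i : ℕ) < n then (i : ℕ) else n) = (i : ℕ) := by
    rcases lt_or_ge (i : ℕ) n with h | h
    · simp [h]
    · have h2 : (i : ℕ) = n := by have := i.isLt; omega
      simp [h2]
  simp [h]

lemma degQ (n : ℕ) : (det (Qmat ν n)).natDegree ≤ n := by
  rw [detQA, detA_sum]
  refine (natDegree_smul_le _ _).trans ?_
  refine natDegree_sum_le_of_forall_le _ _ fun j _ => ?_
  refine (natDegree_smul_le _ _).trans ?_
  simpa using (Nat.le_of_lt_succ j.isLt)

lemma coeffQ (n : ℕ) : (det (Qmat ν n)).coeff n = (-1 : K) ^ n * cc ν n (Fin.last n) := by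
  rw [detQA, coeff_smul, detA_sum, finset_sum_coeff, Finset.smul_sum]
  rw [Finset.sum_eq_single (Fin.last n)]
  · have h2 : (-1 : K) ^ (n + n) = 1 := by
      rw [← two_mul, pow_mul]
      norm_num
    rw [coeff_smul, coeff_X_pow, Fin.val_last, if_pos rfl, smul_eq_mul, smul_eq_mul,
      mul_one, h2, one_mul]
  · intro j _ hj
    have hje : (j : ℕ) ≠ n := by
      intro h
      exact hj (Fin.ext (by simp [h]))
    rw [coeff_smul, coeff_X_pow, if_neg (fun h => hje h.symm)]
    simp
  · simp

section Lfunc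

variable (L : Polynomial K →ₗ[K] K) (hν : ∀ n, ν n = L (X ^ n))

include hν

lemma LXA (n k : ℕ) : L (X ^ k * det (Amat ν n)) = Dk ν n k := by
  rw [detA_sum, Finset.mul_sum, map_sum, Dk_sum]
  refine Finset.sum_congr rfl fun j _ => ?_
  have h : (X : Polynomial K) ^ k * (((-1 : K) ^ (n + (j : ℕ)) * cc ν n j) • X ^ (j : ℕ))
      = ((-1 : K) ^ (n + (j : ℕ)) * cc ν n j) • X ^ (k + (j : ℕ)) := by
    rw [mul_smul_comm, ← pow_add]
  rw [h, _root_.map_smul, ← hν, smul_eq_mul]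
  ring

lemma LXQ (n k : ℕ) :
    L (X ^ k * det (Qmat ν n)) = (-1 : K) ^ n * Dk ν n k := by
  rw [detQA, mul_smul_comm, _root_.map_smul, LXA ν L hν, smul_eq_mul]

omit hν in
lemma L_mul (p : Polynomial K) (n m : ℕ) (hp : p.natDegree < m + 1) :
    L (p * det (Qmat ν n))
      = ∑ k ∈ Finset.range (m + 1), p.coeff k • L (X ^ k * det (Qmat ν n)) := by
  conv_lhs => rw [p.as_sum_range' (m + 1) hp]
  rw [Finset.sum_mul, map_sum]
  refine Finset.sum_congr rfl fun k _ => ?_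
  rw [← C_mul_X_pow_eq_monomial, mul_assoc, ← smul_eq_C_mul, _root_.map_smul]

end Lfunc

end MomOrth

open Polynomial Matrix in
theorem orthogonal_polynomials_from_moments_second_form {K : Type*} [Field K] [CharZero K]
    (L : Polynomial K →ₗ[K] K) (ν : ℕ → K) (hν : ∀ n, ν n = L (X ^ n))
    (hH : ∀ n : ℕ, det (of fun i j : Fin (n + 1) => ν (i.val + j.val)) ≠ 0)
    (Q : ℕ → Polynomial K)
    (hQ : ∀ n, Q n =
      det (of fun i j : Fin n => C (ν (i.val + j.val + 1)) - C (ν (i.val + j.val)) * X)) :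
    (∀ m n, m ≠ n → L (Q m * Q n) = 0) ∧ (∀ n, L (Q n ^ 2) ≠ 0) := by
  have hQ' : ∀ n, Q n = Matrix.det (MomOrth.Qmat ν n) := hQ
  have hH' : ∀ m : ℕ, Matrix.det (Matrix.of fun i j : Fin m => ν ((i : ℕ) + (j : ℕ))) ≠ 0 := by
    intro m
    cases m with
    | zero => simp [Matrix.det_fin_zero]
    | succ k => exact hH k
  have key : ∀ m n : ℕ, m < n → L (Q m * Q n) = 0 := by
    intro m n h
    rw [hQ' m, hQ' n, MomOrth.L_mul ν L _ n m (Nat.lt_succ_of_le (MomOrth.degQ ν m))]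
    refine Finset.sum_eq_zero fun k hk => ?_
    rw [MomOrth.LXQ ν L hν n k, MomOrth.Dk_eq_zero ν (by rw [Finset.mem_range] at hk; omega)]
    simp
  refine ⟨fun m n hmn => ?_, fun n => ?_⟩
  · rcases hmn.lt_or_gt with h | h
    · exact key m n h
    · rw [mul_comm]
      exact key n m h
  · rw [sq, hQ' n, MomOrth.L_mul ν L _ n n (Nat.lt_succ_of_le (MomOrth.degQ ν n))]
    rw [Finset.sum_eq_single n]
    · rw [MomOrth.LXQ ν L hν n n, smul_eq_mul, MomOrth.coeffQ ν n]
      apply mul_ne_zero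
      · apply mul_ne_zero (pow_ne_zero _ (by norm_num))
        rw [MomOrth.cc_last]
        exact hH' n
      · apply mul_ne_zero (pow_ne_zero _ (by norm_num))
        rw [MomOrth.Dk_diag]
        exact hH n
    · intro k hk hkn
      have hklt : k < n := by rw [Finset.mem_range] at hk; omega
      rw [MomOrth.LXQ ν L hν n k, MomOrth.Dk_eq_zero ν hklt]
      simp
    · simp
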